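/- The commutator subgroup of the group ⟨a, b | ab = (ba)²⟩ is abelian but not finitely generated. -/

import Mathlib

/-- Affine maps `x ↦ s x + tr` over ℚ. -/
@[ext] structure Aff8 where
  s : ℚˣ
  tr : ℚ

namespace Aff8

instance : Mul Aff8 := ⟨fun f g => ⟨f.s * g.s, (f.s : ℚ) * g.tr + f.tr⟩⟩
instance : One Aff8 := ⟨⟨1, 0⟩⟩
instance : Inv Aff8 := ⟨fun f => ⟨f.s⁻¹, -(((f.s⁻¹ : ℚˣ) : ℚ) * f.tr)⟩⟩

@[simp] lemma mul_s (f g : Aff8) : (f * g).s = f.s * g.s := rfl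
@[simp] lemma mul_tr (f g : Aff8) : (f * g).tr = (f.s : ℚ) * g.tr + f.tr := rfl
@[simp] lemma one_s : (1 : Aff8).s = 1 := rfl
@[simp] lemma one_tr : (1 : Aff8).tr = 0 := rfl
@[simp] lemma inv_s (f : Aff8) : f⁻¹.s = f.s⁻¹ := rfl
@[simp] lemma inv_tr (f : Aff8) : f⁻¹.tr = -(((f.s⁻¹ : ℚˣ) : ℚ) * f.tr) := rfl

instance : Group Aff8 where
  mul_assoc f g h := by ext <;> simp <;> ring
  one_mul f := by ext <;> simp
  mul_one f := by ext <;> simp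
  inv_mul_cancel f := by
    ext
    · simp
    · simp [← Units.val_mul]

/-- slope homomorphism -/
def slope : Aff8 →* ℚˣ where
  toFun f := f.s
  map_one' := rfl
  map_mul' _ _ := rfl

end Aff8


/-- Relation `ab = baba`, generators `a = of 0`, `b = of 1`. -/
def relsStmt8 : Set (FreeGroup (Fin 2)) :=
  let a := FreeGroup.of (0 : Fin 2)
  let b := FreeGroup.of (1 : Fin 2)
  {a * b * (b * a * b * a)⁻¹}

namespace Stmt8
open Subgroup
open scoped commutatorElement

abbrev G := PresentedGroup relsStmt8

def a : G := PresentedGroup.of 0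
def b : G := PresentedGroup.of 1

lemma rel : a * b = b * a * b * a := by
  have h : PresentedGroup.mk relsStmt8
      (FreeGroup.of 0 * FreeGroup.of 1 *
        (FreeGroup.of 1 * FreeGroup.of 0 * FreeGroup.of 1 * FreeGroup.of 0)⁻¹) = 1 := by
    apply (QuotientGroup.eq_one_iff _).2
    exact Subgroup.subset_normalClosure (by simp [relsStmt8])
  simp only [map_mul, map_inv, mul_inv_eq_one] at h
  exact h

def t : G := b * a

lemma conj_t : a * t * a⁻¹ = t ^ 2 := by
  have : a * t * a⁻¹ = a * b := by rw [t]; group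
  rw [this, rel, t, pow_two]
  group

def tn (n : ℤ) : G := a ^ n * t * (a ^ n)⁻¹

lemma tn_zero : tn 0 = t := by simp [tn]

lemma tn_succ (n : ℤ) : tn (n + 1) = tn n ^ 2 := by
  have h1 : a ^ (n + 1) * t * (a ^ (n + 1))⁻¹ = a ^ n * (a * t * a⁻¹) * (a ^ n)⁻¹ := by
    rw [zpow_add_one]; group
  rw [tn, h1, conj_t, tn, pow_two, pow_two]
  group

lemma tn_add_nat (n : ℤ) (k : ℕ) : tn (n + k) = tn n ^ (2 ^ k : ℕ) := by
  induction k with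
  | zero => simp
  | succ k ih =>
    have : (n + (k + 1 : ℕ)) = (n + k) + 1 := by push_cast; ring
    rw [this, tn_succ, ih, ← pow_mul, pow_succ]

lemma tn_commute (n m : ℤ) : Commute (tn n) (tn m) := by
  have key : ∀ p q : ℤ, p ≤ q → Commute (tn p) (tn q) := by
    intro p q hpq
    have : q = p + (q - p).toNat := by
      rw [Int.toNat_of_nonneg (by omega)]; ring
    rw [this, tn_add_nat]
    exact (Commute.refl _).pow_right _
  rcases le_total n m with h | h
  · exact key n m h
  · exact (key m n h).symm

def N : Subgroup G := closure (Set.range tn)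

lemma tn_mem_N (n : ℤ) : tn n ∈ N := subset_closure ⟨n, rfl⟩

lemma N_comm : ∀ x ∈ N, ∀ y ∈ N, Commute x y := by
  intro x hx y hy
  induction hx, hy using closure_induction₂ with
  | mem x y hx hy =>
    obtain ⟨n, rfl⟩ := hx; obtain ⟨m, rfl⟩ := hy
    exact tn_commute n m
  | one_left x hx => exact Commute.one_left x
  | one_right x hx => exact Commute.one_right x
  | mul_left x y z _ _ _ h1 h2 => exact h1.mul_left h2
  | mul_right y z x _ _ _ h1 h2 => exact h1.mul_right h2
  | inv_left x y _ _ h => exact h.inv_left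
  | inv_right x y _ _ h => exact h.inv_right

lemma b_eq : b = t * a⁻¹ := by rw [t]; group

lemma conj_a_tn (n : ℤ) : a * tn n * a⁻¹ = tn (n + 1) := by
  rw [tn, tn, zpow_add_one]; group

lemma conj_ainv_tn (n : ℤ) : a⁻¹ * tn n * a = tn (n - 1) := by
  rw [tn, tn, zpow_sub_one]; group

lemma conj_b_tn (n : ℤ) : b * tn n * b⁻¹ = tn (n - 1) := by
  have h : b * tn n * b⁻¹ = t * (a⁻¹ * tn n * a) * t⁻¹ := by rw [b_eq]; group
  rw [h, conj_ainv_tn, ← tn_zero, (tn_commute 0 (n - 1)).eq]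
  group

lemma conj_binv_tn (n : ℤ) : b⁻¹ * tn n * b = tn (n + 1) := by
  have h : b⁻¹ * tn n * b = a * (t⁻¹ * tn n * t) * a⁻¹ := by rw [b_eq]; group
  have h2 : t⁻¹ * tn n * t = tn n := by
    rw [← tn_zero, mul_assoc, (tn_commute n 0).eq]; group
  rw [h, h2, conj_a_tn]

lemma conj_mem_N {g : G} (h : ∀ n, g * tn n * g⁻¹ ∈ N) : ∀ x ∈ N, g * x * g⁻¹ ∈ N := by
  intro x hx
  induction hx using closure_induction with
  | mem x hx => obtain ⟨n, rfl⟩ := hx; exact h n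
  | one => simpa using one_mem N
  | mul x y _ _ h1 h2 =>
    have : g * (x * y) * g⁻¹ = (g * x * g⁻¹) * (g * y * g⁻¹) := by group
    rw [this]; exact mul_mem h1 h2
  | inv x _ h1 =>
    have : g * x⁻¹ * g⁻¹ = (g * x * g⁻¹)⁻¹ := by group
    rw [this]; exact inv_mem h1

def S : Subgroup G where
  carrier := {g | (∀ x ∈ N, g * x * g⁻¹ ∈ N) ∧ (∀ x ∈ N, g⁻¹ * x * g ∈ N)}
  one_mem' := by constructor <;> intro x hx <;> simpa using hx
  mul_mem' := by
    rintro g h ⟨hg1, hg2⟩ ⟨hh1, hh2⟩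
    constructor
    · intro x hx
      have : g * h * x * (g * h)⁻¹ = g * (h * x * h⁻¹) * g⁻¹ := by group
      rw [this]; exact hg1 _ (hh1 _ hx)
    · intro x hx
      have : (g * h)⁻¹ * x * (g * h) = h⁻¹ * (g⁻¹ * x * g) * h := by group
      rw [this]; exact hh2 _ (hg2 _ hx)
  inv_mem' := by
    rintro g ⟨hg1, hg2⟩
    constructor
    · intro x hx; simpa using hg2 x hx
    · intro x hx; simpa using hg1 x hx

instance N_normal : N.Normal := by
  constructor
  intro x hx g
  have hS : g ∈ S := by
    apply PresentedGroup.generated_by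
    intro j
    fin_cases j
    · exact ⟨conj_mem_N fun n => (conj_a_tn n) ▸ tn_mem_N _,
        conj_mem_N fun n => (conj_ainv_tn n) ▸ tn_mem_N _⟩
    · exact ⟨conj_mem_N fun n => (conj_b_tn n) ▸ tn_mem_N _,
        conj_mem_N fun n => (conj_binv_tn n) ▸ tn_mem_N _⟩
  exact hS.1 x hx

lemma mk_b_eq : (QuotientGroup.mk' N) b = ((QuotientGroup.mk' N) a)⁻¹ := by
  have ht : (QuotientGroup.mk' N) t = 1 := by
    rw [QuotientGroup.mk'_apply, QuotientGroup.eq_one_iff]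
    exact tn_zero ▸ tn_mem_N 0
  rw [b_eq, map_mul, ht, one_mul, map_inv]

lemma commutator_le_N : commutator G ≤ N := by
  rw [commutator_def, Subgroup.commutator_le]
  intro g _ h _
  have hz : ∀ u : G, (QuotientGroup.mk' N) u ∈ Subgroup.zpowers ((QuotientGroup.mk' N) a) := by
    intro u
    show u ∈ Subgroup.comap (QuotientGroup.mk' N) (Subgroup.zpowers ((QuotientGroup.mk' N) a))
    apply PresentedGroup.generated_by
    intro j
    fin_cases j
    · exact Subgroup.mem_comap.2 (Subgroup.mem_zpowers _)
    · exact Subgroup.mem_comap.2 (mk_b_eq ▸ inv_mem (Subgroup.mem_zpowers _))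
  obtain ⟨i, hi⟩ := hz g
  obtain ⟨j, hj⟩ := hz h
  have : (QuotientGroup.mk' N) ⁅g, h⁆ = 1 := by
    rw [commutatorElement_def]
    simp only [map_mul, map_inv, ← hi, ← hj]
    group
  rwa [QuotientGroup.mk'_apply, QuotientGroup.eq_one_iff] at this

lemma t_mem_commutator : t ∈ commutator G := by
  have heq : t = ⁅a⁻¹, b⁻¹⁆ := by
    have : ⁅a⁻¹, b⁻¹⁆ = a⁻¹ * b⁻¹ * (a * b) := by rw [commutatorElement_def]; group
    rw [this, rel, t]; group
  rw [heq, _root_.commutator_def]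
  exact Subgroup.commutator_mem_commutator (Subgroup.mem_top _) (Subgroup.mem_top _)

lemma tn_mem_commutator (n : ℤ) : tn n ∈ commutator G := by
  rw [tn]
  have : commutator G = ⁅(⊤ : Subgroup G), ⊤⁆ := commutator_def G
  have hn : (commutator G).Normal := by rw [this]; infer_instance
  simpa using hn.conj_mem t t_mem_commutator (a ^ n)

def u2 : ℚˣ := Units.mk0 2 (by norm_num)

@[simp] lemma u2_val : (u2 : ℚ) = 2 := rfl
@[simp] lemma u2_inv_val : ((u2⁻¹ : ℚˣ) : ℚ) = 2⁻¹ := by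
  have h : ((u2⁻¹ : ℚˣ) : ℚ) * 2 = 1 := by
    rw [← u2_val, ← Units.val_mul, inv_mul_cancel, Units.val_one]
  field_simp at h ⊢
  exact h


def A : Aff8 := ⟨u2, 0⟩
def B : Aff8 := ⟨u2⁻¹, 1⟩

def fg8 : Fin 2 → Aff8 := ![A, B]

lemma hrel : ∀ r ∈ relsStmt8, FreeGroup.lift fg8 r = 1 := by
  intro r hr
  simp only [relsStmt8, Set.mem_singleton_iff] at hr
  subst hr
  simp only [map_mul, map_inv, FreeGroup.lift_apply_of]
  ext
  · simp [fg8, A, B]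
  · simp [fg8, A, B]
    norm_num

def ψ : G →* Aff8 := PresentedGroup.toGroup hrel

lemma ψa : ψ a = A := PresentedGroup.toGroup.of hrel
lemma ψb : ψ b = B := PresentedGroup.toGroup.of hrel

def ι : ℚˣ →* Aff8 where
  toFun u := ⟨u, 0⟩
  map_one' := rfl
  map_mul' u v := by ext <;> simp

lemma ψ_tn (n : ℤ) : ψ (tn n) = ⟨1, (2:ℚ)^n⟩ := by
  have ht : ψ t = ⟨1, 1⟩ := by
    rw [t, map_mul, ψa, ψb]
    ext <;> simp [A, B]
  have hA : ψ (a ^ n) = ⟨u2 ^ n, 0⟩ := by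
    rw [map_zpow, ψa]
    show ι u2 ^ n = _
    rw [← map_zpow]
    rfl
  rw [tn, map_mul, map_mul, map_inv, hA, ht]
  ext
  · simp
  · simp [Units.val_zpow_eq_zpow_val]

lemma ψ_s_of_commutator {x : G} (hx : x ∈ commutator G) : (ψ x).s = 1 := by
  have h := Abelianization.commutator_subset_ker (Aff8.slope.comp ψ) hx
  simpa [MonoidHom.mem_ker, Aff8.slope] using h

def c : commutator G →* Multiplicative ℚ where
  toFun x := Multiplicative.ofAdd (ψ x.1).tr
  map_one' := by
    have : ψ ((1 : commutator G) : G) = 1 := by simp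
    simp [this]
  map_mul' x y := by
    have : ψ ((x * y : commutator G) : G) = ψ x.1 * ψ y.1 := by
      rw [← map_mul]; rfl
    simp only [this, Aff8.mul_tr, ψ_s_of_commutator x.2]
    rw [← ofAdd_add]
    congr 1
    push_cast
    ring

lemma c_tn (n : ℕ) : c ⟨tn (-(n:ℤ)), tn_mem_commutator _⟩ =
    Multiplicative.ofAdd (((2:ℚ)^n)⁻¹) := by
  show Multiplicative.ofAdd (ψ (tn (-(n:ℤ)))).tr = _
  rw [ψ_tn]
  congr 1
  rw [zpow_neg, zpow_natCast]

lemma no_fg (H : Subgroup (Multiplicative ℚ)) (hfg : H.FG)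
    (h : ∀ n : ℕ, Multiplicative.ofAdd (((2:ℚ)^n)⁻¹) ∈ H) : False := by
  obtain ⟨S, hS⟩ := hfg
  set D : ℕ := ∏ s ∈ S, (Multiplicative.toAdd s).den with hD
  have hDpos : 0 < D := Finset.prod_pos fun s _ => (Multiplicative.toAdd s).pos
  have hM : H ≤ Subgroup.zpowers (Multiplicative.ofAdd ((D:ℚ)⁻¹)) := by
    rw [← hS]
    apply (Subgroup.closure_le _).2
    intro s hs
    set q : ℚ := Multiplicative.toAdd s with hq
    have hdvd : q.den ∣ D := Finset.dvd_prod_of_mem _ hs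
    refine ⟨q.num * (D / q.den : ℕ), ?_⟩
    have hD0 : (D : ℚ) ≠ 0 := Nat.cast_ne_zero.2 hDpos.ne'
    have this : ((q.num * (D / q.den : ℕ) : ℤ) : ℚ) * (D:ℚ)⁻¹ = q := by
      have hden : ((D / q.den : ℕ) : ℚ) * (q.den : ℚ) = (D : ℚ) := by
        rw [← Nat.cast_mul, Nat.div_mul_cancel hdvd]
      have hqd : q * (q.den : ℚ) = (q.num : ℚ) := Rat.mul_den_eq_num q
      have key : ((q.num * (D / q.den : ℕ) : ℤ) : ℚ) = q * D := by
        push_cast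
        calc (q.num : ℚ) * ((D / q.den : ℕ) : ℚ) = q * ((q.den : ℚ) * ((D / q.den : ℕ) : ℚ)) := by
              rw [← mul_assoc, hqd]
          _ = q * D := by rw [mul_comm ((q.den : ℚ)) _, hden]
      rw [key, mul_assoc, mul_inv_cancel₀ hD0, mul_one]
    calc Multiplicative.ofAdd ((D:ℚ)⁻¹) ^ (q.num * (D / q.den : ℕ) : ℤ)
        = Multiplicative.ofAdd (((q.num * (D / q.den : ℕ) : ℤ) : ℚ) * (D:ℚ)⁻¹) := by
          rw [← ofAdd_zsmul]; congr 1
      _ = s := by rw [this]; simp [hq]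
  obtain ⟨k, hk⟩ := hM (h D)
  have hq : (k : ℚ) * ((D:ℚ)⁻¹) = ((2:ℚ)^D)⁻¹ := by
    have := congrArg Multiplicative.toAdd hk
    rw [toAdd_zpow] at this
    simpa [zsmul_eq_mul] using this
  have hD0 : (D : ℚ) ≠ 0 := Nat.cast_ne_zero.2 hDpos.ne'
  have h2D : (0:ℚ) < 2^D := by positivity
  have h2 : (k:ℚ) * 2^D = D := by
    field_simp at hq
    linarith [hq]
  have hlt : (D:ℚ) < 2^D := by
    have := Nat.lt_two_pow_self (n := D)
    exact_mod_cast this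
  have hDQ : (0:ℚ) < (D:ℚ) := by exact_mod_cast hDpos
  have hkq : (k:ℚ) = (D:ℚ) / 2^D := by
    rw [eq_div_iff (ne_of_gt h2D)]; linarith
  have hkpos : (0:ℚ) < (k:ℚ) := by rw [hkq]; exact div_pos hDQ h2D
  have hk0 : 0 < k := by exact_mod_cast hkpos
  have hk1 : 1 ≤ k := by omega
  have hk1' : (1:ℚ) ≤ (k:ℚ) := by exact_mod_cast hk1
  nlinarith


end Stmt8

/-- The commutator subgroup of `⟨a, b | ab = (ba)²⟩` is abelian but not finitely
generated. -/
theorem stmt_8 :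
    (∀ x y : commutator (PresentedGroup relsStmt8), x * y = y * x) ∧
    ¬ (commutator (PresentedGroup relsStmt8)).FG := by
  constructor
  · intro x y
    exact Subtype.ext (Stmt8.N_comm _ (Stmt8.commutator_le_N x.2) _ (Stmt8.commutator_le_N y.2))
  · intro hFG
    haveI : Group.FG (commutator (PresentedGroup relsStmt8)) :=
      (Group.fg_iff_subgroup_fg _).2 hFG
    have h2 : (Stmt8.c.range).FG :=
      (Group.fg_iff_subgroup_fg _).1 (Group.fg_range Stmt8.c)
    apply Stmt8.no_fg _ h2
    intro n
    exact ⟨⟨Stmt8.tn (-(n:ℤ)), Stmt8.tn_mem_commutator _⟩, Stmt8.c_tn n⟩
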